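/- Let X and ε be independent real random variables on a probability space, with X Gaussian of mean 0 and variance τ² and ε Gaussian of mean 0 and variance σ², where τ, σ > 0. Set Y = X + ε and γ = τ²/(σ² + τ²). Then the conditional expectation of X given the σ-algebra generated by Y satisfies E[X | Y] = γ·Y almost surely. -/

import Mathlib

open MeasureTheory ProbabilityTheory
open scoped NNReal ENNReal

lemma aux_integrable_id_gaussianReal (v : ℝ≥0) :
    Integrable (fun x : ℝ => x) (gaussianReal 0 v) := by
  rcases eq_or_ne v 0 with hv | hv
  · rw [hv, gaussianReal_zero_var]
    exact ⟨measurable_id.aestronglyMeasurable, by simp [HasFiniteIntegral, lintegral_dirac]⟩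
  · rw [gaussianReal_of_var_ne_zero _ hv]
    rw [integrable_withDensity_iff (measurable_gaussianPDF _ _)
      (ae_of_all _ fun x => ENNReal.ofReal_lt_top)]
    have : (fun x : ℝ => x * (gaussianPDF 0 v x).toReal)
        = fun x : ℝ => (Real.sqrt (2 * Real.pi * v))⁻¹ * (x * Real.exp (-(2 * (v:ℝ))⁻¹ * x ^ 2)) := by
      ext x
      rw [gaussianPDF, ENNReal.toReal_ofReal (gaussianPDFReal_nonneg _ _ _)]
      simp only [gaussianPDFReal, sub_zero]
      ring_nf
    rw [this]
    exact (integrable_mul_exp_neg_mul_sq (by positivity)).const_mul _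


lemma aux_integral_id_gaussianReal (v : ℝ≥0) :
    ∫ x, x ∂(gaussianReal 0 v) = 0 := by
  rcases eq_or_ne v 0 with hv | hv
  · rw [hv, gaussianReal_zero_var, integral_dirac]
  · rw [gaussianReal_of_var_ne_zero _ hv]
    set p : ℝ → ℝ≥0 := fun x => Real.toNNReal (gaussianPDFReal 0 v x) with hp
    have hmeas : Measurable p := (measurable_gaussianPDFReal 0 v).real_toNNReal
    have hwd : gaussianPDF 0 v = fun x => ((p x : ℝ≥0) : ℝ≥0∞) := rfl
    rw [hwd, integral_withDensity_eq_integral_smul hmeas]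
    have hodd : ∀ x : ℝ, p (-x) • (-x) = - (p x • x) := by
      intro x
      have : gaussianPDFReal 0 v (-x) = gaussianPDFReal 0 v x := by
        simp only [gaussianPDFReal, sub_zero]
        ring_nf
      simp only [hp, NNReal.smul_def, smul_eq_mul, this]
      ring
    have h := integral_neg_eq_self (fun x : ℝ => p x • x) volume
    simp only [hodd, integral_neg] at h
    linarith


lemma aux_pdf_mul (s t : ℝ≥0) (hs : s ≠ 0) (ht : t ≠ 0)
    (g : ℝ) (hg : g = (t:ℝ)/((s:ℝ)+(t:ℝ))) (v : ℝ≥0) (hv : v = s*t/(s+t)) (x u : ℝ) :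
    gaussianPDFReal 0 s (u - x) * gaussianPDFReal 0 t x
      = gaussianPDFReal 0 v (x - g*u) * gaussianPDFReal 0 (s+t) u := by
  have hsR : (0:ℝ) < s := lt_of_le_of_ne (s.coe_nonneg) (by exact_mod_cast (Ne.symm hs))
  have htR : (0:ℝ) < t := lt_of_le_of_ne (t.coe_nonneg) (by exact_mod_cast (Ne.symm ht))
  have hst : (0:ℝ) < (s:ℝ) + t := by positivity
  have hvR : (v:ℝ) = (s:ℝ)*t/((s:ℝ)+t) := by
    rw [hv]
    push_cast [NNReal.coe_div]
    ring
  have hvpos : (0:ℝ) < (v:ℝ) := by rw [hvR]; positivity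
  have hstc : ((s+t : ℝ≥0) : ℝ) = (s:ℝ) + t := by push_cast; ring
  simp only [gaussianPDFReal, sub_zero]
  have hconst : (Real.sqrt (2 * Real.pi * s))⁻¹ * (Real.sqrt (2 * Real.pi * t))⁻¹
      = (Real.sqrt (2 * Real.pi * v))⁻¹ * (Real.sqrt (2 * Real.pi * (s+t : ℝ≥0)))⁻¹ := by
    rw [← mul_inv, ← mul_inv, ← Real.sqrt_mul (by positivity), ← Real.sqrt_mul (by positivity)]
    rw [hstc, hvR]
    congr 1
    field_simp
  have hexp : Real.exp (-(u - x) ^ 2 / (2 * s)) * Real.exp (-x ^ 2 / (2 * t))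
      = Real.exp (-(x - g*u) ^ 2 / (2 * v)) * Real.exp (-u ^ 2 / (2 * (s+t : ℝ≥0))) := by
    rw [← Real.exp_add, ← Real.exp_add]
    congr 1
    rw [hstc, hvR, hg]
    field_simp
    ring
  calc (Real.sqrt (2 * Real.pi * s))⁻¹ * Real.exp (-(u - x) ^ 2 / (2 * s)) *
        ((Real.sqrt (2 * Real.pi * t))⁻¹ * Real.exp (-x ^ 2 / (2 * t)))
      = ((Real.sqrt (2 * Real.pi * s))⁻¹ * (Real.sqrt (2 * Real.pi * t))⁻¹) *
        (Real.exp (-(u - x) ^ 2 / (2 * s)) * Real.exp (-x ^ 2 / (2 * t))) := by ring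
    _ = ((Real.sqrt (2 * Real.pi * v))⁻¹ * (Real.sqrt (2 * Real.pi * (s+t : ℝ≥0)))⁻¹) *
        (Real.exp (-(x - g*u) ^ 2 / (2 * v)) * Real.exp (-u ^ 2 / (2 * (s+t : ℝ≥0)))) := by
        rw [hconst, hexp]
    _ = _ := by ring

lemma aux_prod_measure (s t : ℝ≥0) (hs : s ≠ 0) (ht : t ≠ 0)
    (g : ℝ) (hg : g = (t:ℝ)/((s:ℝ)+(t:ℝ))) (v : ℝ≥0) (hv : v = s*t/(s+t))
    (A B : Set ℝ) (hA : MeasurableSet A) (hB : MeasurableSet B) :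
    ((gaussianReal 0 t).prod (gaussianReal 0 s))
      {p : ℝ × ℝ | (1-g)*p.1 - g*p.2 ∈ A ∧ p.1 + p.2 ∈ B}
      = gaussianReal 0 v A * gaussianReal 0 (s+t) B := by
  have hst0 : s + t ≠ 0 := fun h => ht (by simpa using (add_eq_zero.mp h).2)
  have hv0 : v ≠ 0 := by
    intro h
    apply hs
    have : v * (s+t) = s * t := by rw [hv, div_mul_cancel₀]; exact hst0
    rw [h, zero_mul] at this
    rcases mul_eq_zero.mp this.symm with h' | h'
    · exact h'
    · exact absurd h' ht
  have hSmeas : MeasurableSet {p : ℝ × ℝ | (1-g)*p.1 - g*p.2 ∈ A ∧ p.1 + p.2 ∈ B} := by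
    refine MeasurableSet.inter ?_ ?_
    · exact ((measurable_const.mul measurable_fst).sub (measurable_const.mul measurable_snd)) hA
    · exact (measurable_fst.add measurable_snd) hB
  -- inner slice
  set T : ℝ → Set ℝ := fun x => {u : ℝ | x - g*u ∈ A ∧ u ∈ B} with hT
  have hTmeas : ∀ x, MeasurableSet (T x) := fun x =>
    ((measurable_const.sub (measurable_const.mul measurable_id)) hA).inter hB
  rw [Measure.prod_apply hSmeas]
  have hslice : ∀ x : ℝ, (Prod.mk x ⁻¹' {p : ℝ × ℝ | (1-g)*p.1 - g*p.2 ∈ A ∧ p.1 + p.2 ∈ B})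
      = (fun e => x + e) ⁻¹' (T x) := by
    intro x
    ext e
    simp only [Set.mem_preimage, Set.mem_setOf_eq, hT]
    rw [show (1-g)*x - g*e = x - g*(x+e) by ring]
  have hinner : ∀ x : ℝ, gaussianReal 0 s (Prod.mk x ⁻¹' {p : ℝ × ℝ | (1-g)*p.1 - g*p.2 ∈ A ∧ p.1 + p.2 ∈ B})
      = ∫⁻ u, (T x).indicator (gaussianPDF x s) u := by
    intro x
    rw [hslice x, ← Measure.map_apply (by fun_prop : Measurable fun e : ℝ => x + e) (hTmeas x),
      gaussianReal_map_const_add, zero_add, gaussianReal_of_var_ne_zero _ hs,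
      withDensity_apply _ (hTmeas x), ← lintegral_indicator (hTmeas x) _]
  simp_rw [hinner]
  -- outer integral as withDensity over volume
  have hFm : Measurable (Function.uncurry fun x u => (T x).indicator (gaussianPDF x s) u) := by
    have heq : (Function.uncurry fun x u => (T x).indicator (gaussianPDF x s) u)
        = {p : ℝ × ℝ | p.1 - g*p.2 ∈ A ∧ p.2 ∈ B}.indicator
            (fun p => ENNReal.ofReal (gaussianPDFReal 0 s (p.2 - p.1))) := by
      ext p
      simp only [Function.uncurry, gaussianPDF, Set.indicator_apply, gaussianPDFReal_sub, zero_add]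
      rfl
    rw [heq]
    refine Measurable.indicator ?_ ?_
    · exact ENNReal.measurable_ofReal.comp
        ((measurable_gaussianPDFReal 0 s).comp (measurable_snd.sub measurable_fst))
    · exact (((measurable_fst.sub (measurable_const.mul measurable_snd))) hA).inter
        (measurable_snd hB)
  rw [gaussianReal_of_var_ne_zero _ ht,
    lintegral_withDensity_eq_lintegral_mul _ (measurable_gaussianPDF _ _)
      (Measurable.lintegral_prod_right hFm)]
  set F : ℝ → ℝ → ℝ≥0∞ := fun x u =>
    A.indicator (gaussianPDF 0 v) (x - g*u) * B.indicator (gaussianPDF 0 (s+t)) u with hF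
  have key : ∀ x : ℝ, (gaussianPDF 0 t * fun x => ∫⁻ u, (T x).indicator (gaussianPDF x s) u) x
      = ∫⁻ u, F x u := by
    intro x
    rw [Pi.mul_apply, ← lintegral_const_mul' (gaussianPDF 0 t x) _ (by rw [gaussianPDF]; exact ENNReal.ofReal_ne_top)]
    congr 1
    ext u
    by_cases h1 : x - g*u ∈ A
    · by_cases h2 : u ∈ B
      · have hu : u ∈ T x := ⟨h1, h2⟩
        rw [hF]
        simp only [Set.indicator_of_mem hu, Set.indicator_of_mem h1, Set.indicator_of_mem h2]
        rw [gaussianPDF, gaussianPDF, gaussianPDF, gaussianPDF,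
          ← ENNReal.ofReal_mul (gaussianPDFReal_nonneg _ _ _),
          ← ENNReal.ofReal_mul (gaussianPDFReal_nonneg _ _ _)]
        congr 1
        rw [show gaussianPDFReal x s u = gaussianPDFReal 0 s (u - x) by
          rw [gaussianPDFReal_sub, zero_add]]
        rw [mul_comm]
        exact aux_pdf_mul s t hs ht g hg v hv x u
      · have hu : u ∉ T x := fun h => h2 h.2
        rw [hF]
        simp [Set.indicator_of_notMem hu, Set.indicator_of_notMem h2]
    · have hu : u ∉ T x := fun h => h1 h.1
      rw [hF]
      simp [Set.indicator_of_notMem hu, Set.indicator_of_notMem h1]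
  simp_rw [key]
  have hFum : Measurable (Function.uncurry F) := by
    refine Measurable.mul ?_ ?_
    · exact ((measurable_gaussianPDF 0 v).indicator hA).comp
        (measurable_fst.sub (measurable_const.mul measurable_snd))
    · exact ((measurable_gaussianPDF 0 (s+t)).indicator hB).comp measurable_snd
  rw [lintegral_lintegral_swap hFum.aemeasurable]
  have hBind : ∀ u : ℝ, B.indicator (gaussianPDF 0 (s+t)) u ≠ ⊤ := by
    intro u
    by_cases h : u ∈ B
    · rw [Set.indicator_of_mem h, gaussianPDF]; exact ENNReal.ofReal_ne_top
    · rw [Set.indicator_of_notMem h]; exact ENNReal.zero_ne_top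
  have hx : ∀ u : ℝ, ∫⁻ x, F x u = gaussianReal 0 v A * B.indicator (gaussianPDF 0 (s+t)) u := by
    intro u
    rw [hF]
    rw [lintegral_mul_const' _ _ (hBind u)]
    congr 1
    simp_rw [sub_eq_add_neg]
    rw [lintegral_add_right_eq_self (A.indicator (gaussianPDF 0 v)) (-(g*u)),
      lintegral_indicator hA, ← withDensity_apply _ hA, ← gaussianReal_of_var_ne_zero _ hv0]
  simp_rw [hx]
  rw [lintegral_const_mul' _ _ (measure_ne_top _ _),
    lintegral_indicator hB, ← withDensity_apply _ hB, ← gaussianReal_of_var_ne_zero _ hst0]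


/-- For jointly Gaussian `X ~ N(0,τ²)` and `Y = X + ε` with independent noise
`ε ~ N(0,σ²)`, the conditional expectation of `X` given `Y` is `E[X | Y] = γ·Y` a.s.,
where `γ = τ²/(σ² + τ²)`. -/
theorem stmt_15 {Ω : Type*} [MeasurableSpace Ω] (μ : Measure Ω) [IsProbabilityMeasure μ]
    (X ε : Ω → ℝ) (hX : Measurable X) (hε : Measurable ε)
    (hindep : IndepFun X ε μ)
    (τ σ : ℝ≥0) (hτ : 0 < τ) (hσ : 0 < σ)
    (hXlaw : μ.map X = gaussianReal 0 (τ ^ 2))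
    (hεlaw : μ.map ε = gaussianReal 0 (σ ^ 2))
    (Y : Ω → ℝ) (hY : Y = X + ε)
    (γ : ℝ) (hγ : γ = (τ : ℝ) ^ 2 / ((σ : ℝ) ^ 2 + (τ : ℝ) ^ 2)) :
    μ[X | MeasurableSpace.comap Y Real.measurableSpace] =ᵐ[μ] fun ω => γ * Y ω := by
  set t : ℝ≥0 := τ ^ 2 with ht_def
  set s : ℝ≥0 := σ ^ 2 with hs_def
  have hs : s ≠ 0 := pow_ne_zero _ hσ.ne'
  have ht : t ≠ 0 := pow_ne_zero _ hτ.ne'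
  have hst0 : s + t ≠ 0 := fun h => ht (by simpa using (add_eq_zero.mp h).2)
  have hg : γ = (t : ℝ) / ((s : ℝ) + (t : ℝ)) := by rw [hγ, ht_def, hs_def]; push_cast; ring_nf
  set v : ℝ≥0 := s * t / (s + t) with hv_def
  have hYm : Measurable Y := by rw [hY]; exact hX.add hε
  set Z : Ω → ℝ := fun ω => (1 - γ) * X ω - γ * ε ω with hZ_def
  have hZm : Measurable Z := ((hX.const_mul _).sub (hε.const_mul _)).comp measurable_id
  have hZX : ∀ ω, X ω - γ * Y ω = Z ω := by
    intro ω
    rw [hY, hZ_def]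
    simp only [Pi.add_apply]
    ring
  have hmap : μ.map (fun ω => (X ω, ε ω)) = (gaussianReal 0 t).prod (gaussianReal 0 s) := by
    rw [← hXlaw, ← hεlaw]
    exact (indepFun_iff_map_prod_eq_prod_map_map hX.aemeasurable hε.aemeasurable).mp hindep
  have hjoint : ∀ A B : Set ℝ, MeasurableSet A → MeasurableSet B →
      μ (Z ⁻¹' A ∩ Y ⁻¹' B) = gaussianReal 0 v A * gaussianReal 0 (s + t) B := by
    intro A B hA hB
    have hSmeas : MeasurableSet {p : ℝ × ℝ | (1-γ)*p.1 - γ*p.2 ∈ A ∧ p.1 + p.2 ∈ B} :=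
      (((measurable_const.mul measurable_fst).sub (measurable_const.mul measurable_snd)) hA).inter
        ((measurable_fst.add measurable_snd) hB)
    have hpre : Z ⁻¹' A ∩ Y ⁻¹' B
        = (fun ω => (X ω, ε ω)) ⁻¹' {p : ℝ × ℝ | (1-γ)*p.1 - γ*p.2 ∈ A ∧ p.1 + p.2 ∈ B} := by
      ext ω
      simp only [Set.mem_inter_iff, Set.mem_preimage, Set.mem_setOf_eq, hZ_def, hY, Pi.add_apply]
    rw [hpre, ← Measure.map_apply (hX.prodMk hε) hSmeas, hmap,
      aux_prod_measure s t hs ht γ hg v hv_def A B hA hB]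
  have hZA : ∀ A : Set ℝ, MeasurableSet A → μ (Z ⁻¹' A) = gaussianReal 0 v A := by
    intro A hA
    have := hjoint A Set.univ hA MeasurableSet.univ
    simpa using this
  have hYB : ∀ B : Set ℝ, MeasurableSet B → μ (Y ⁻¹' B) = gaussianReal 0 (s + t) B := by
    intro B hB
    have := hjoint Set.univ B MeasurableSet.univ hB
    simpa using this
  have hZlaw : μ.map Z = gaussianReal 0 v :=
    Measure.ext fun A hA => by rw [Measure.map_apply hZm hA, hZA A hA]
  have hYlaw : μ.map Y = gaussianReal 0 (s + t) :=
    Measure.ext fun B hB => by rw [Measure.map_apply hYm hB, hYB B hB]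
  have hindepZY : IndepFun Z Y μ := by
    rw [indepFun_iff_measure_inter_preimage_eq_mul]
    intro A B hA hB
    rw [hjoint A B hA hB, hZA A hA, hYB B hB]
  have hXint : Integrable X μ := by
    have h1 : Integrable (fun x : ℝ => x) (μ.map X) := hXlaw ▸ aux_integrable_id_gaussianReal t
    exact (integrable_map_measure aestronglyMeasurable_id hX.aemeasurable).mp h1
  have hYint : Integrable Y μ := by
    have h1 : Integrable (fun x : ℝ => x) (μ.map Y) := hYlaw ▸ aux_integrable_id_gaussianReal (s+t)
    exact (integrable_map_measure aestronglyMeasurable_id hYm.aemeasurable).mp h1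
  have hZint : Integrable Z μ := by
    have h1 : Integrable (fun x : ℝ => x) (μ.map Z) := hZlaw ▸ aux_integrable_id_gaussianReal v
    exact (integrable_map_measure aestronglyMeasurable_id hZm.aemeasurable).mp h1
  have hZmean : ∫ ω, Z ω ∂μ = 0 := by
    have h1 : ∫ ω, Z ω ∂μ = ∫ x, x ∂(μ.map Z) :=
      (integral_map hZm.aemeasurable aestronglyMeasurable_id).symm
    rw [h1, hZlaw, aux_integral_id_gaussianReal]
  have hm : MeasurableSpace.comap Y Real.measurableSpace ≤ _ := hYm.comap_le
  haveI : SigmaFinite (μ.trim hm) := by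
    haveI : IsFiniteMeasure (μ.trim hm) := isFiniteMeasure_trim hm
    infer_instance
  refine (ae_eq_condExp_of_forall_setIntegral_eq hm hXint
    (fun s' _ _ => (hYint.const_mul γ).integrableOn) ?_ ?_).symm
  · intro s' hs' _
    obtain ⟨B, hB, hBpre⟩ := hs'
    rw [← hBpre]
    set W : Ω → ℝ := fun ω => B.indicator (fun _ => (1:ℝ)) (Y ω) with hW_def
    have hWind : W = (Y ⁻¹' B).indicator (fun _ => (1:ℝ)) := rfl
    have hWint : Integrable W μ := by
      rw [hWind]
      exact (integrable_const (1:ℝ)).indicator (hYm hB)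
    have hWZ : IndepFun W Z μ := by
      have := (hindepZY.symm.comp (measurable_const.indicator hB) measurable_id :
        IndepFun ((B.indicator (fun _ => (1:ℝ))) ∘ Y) (id ∘ Z) μ)
      exact this
    have hmul : ∫ ω, (W * Z) ω ∂μ = 0 := by
      rw [hWZ.integral_mul_eq_mul_integral hWint.aestronglyMeasurable hZint.aestronglyMeasurable, hZmean, mul_zero]
    have h1 : ∫ ω in Y ⁻¹' B, (X ω - γ * Y ω) ∂μ = 0 := by
      rw [← integral_indicator (hYm hB)]
      have : (Y ⁻¹' B).indicator (fun ω => X ω - γ * Y ω) = W * Z := by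
        ext ω
        by_cases hω : ω ∈ Y ⁻¹' B
        · simp only [Set.indicator_of_mem hω, hWind, Pi.mul_apply, Set.indicator_of_mem hω,
            one_mul, hZX ω]
        · simp [Set.indicator_of_notMem hω, hWind]
      rw [this, hmul]
    have h2 := integral_sub (hXint.integrableOn :
        IntegrableOn X (Y ⁻¹' B) μ) ((hYint.const_mul γ).integrableOn)
    rw [h2] at h1
    linarith
  · refine StronglyMeasurable.aestronglyMeasurable ?_
    have hYc : Measurable[MeasurableSpace.comap Y Real.measurableSpace] Y :=
      Measurable.of_comap_le le_rfl
    exact (hYc.const_mul γ).stronglyMeasurable
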